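/- Let a and q be nonzero complex numbers and let m ≥ n ≥ 0 be integers. Then Σ_{i=0}^{n} (−1)^i {m}_i {n}_i {m+n−i−2; a}_{n−i} {n−1; a}_{n−i} = {m+n−1; a}_n {n−2; a}_n. -/

import Mathlib

set_option maxHeartbeats 1000000


open Finset

/-- The balanced q-bracket `{n} = q^n - q^(-n)`. -/
noncomputable def qbr (q : ℂ) (n : ℤ) : ℂ := q ^ n - q ^ (-n)

/-- The two-variable bracket `{n; a} = a q^n - a⁻¹ q^(-n)`. -/
noncomputable def qbrA (a q : ℂ) (n : ℤ) : ℂ := a * q ^ n - a⁻¹ * q ^ (-n)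

/-- Descending product `{n}_i = {n}{n-1}⋯{n-i+1}` (equal to 1 when `i = 0`). -/
noncomputable def qbrP (q : ℂ) (n : ℤ) (i : ℕ) : ℂ := ∏ k ∈ Finset.range i, qbr q (n - k)

/-- Descending product `{n; a}_i = {n; a}{n-1; a}⋯{n-i+1; a}` (equal to 1 when `i = 0`). -/
noncomputable def qbrAP (a q : ℂ) (n : ℤ) (i : ℕ) : ℂ := ∏ k ∈ Finset.range i, qbrA a q (n - k)

/-- Ascending product `{n; a}{n+1; a}⋯{n+i-1; a}` (used for `{-n; a}_i`, equal to 1 when `i = 0`). -/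
noncomputable def qbrAPasc (a q : ℂ) (n : ℤ) (i : ℕ) : ℂ := ∏ k ∈ Finset.range i, qbrA a q (n + k)

/-- The factorial `{n}! = {n}_n`. -/
noncomputable def qfac (q : ℂ) (n : ℕ) : ℂ := qbrP q n n

/-- The balanced q-binomial coefficient `[n choose i] = {n}!/({i}!{n-i}!)`. -/
noncomputable def qbinom (q : ℂ) (n i : ℕ) : ℂ := qfac q n / (qfac q i * qfac q (n - i))

lemma qbrP_zero (q : ℂ) (x : ℤ) : qbrP q x 0 = 1 := by simp [qbrP]
lemma qbrAP_zero (a q : ℂ) (x : ℤ) : qbrAP a q x 0 = 1 := by simp [qbrAP]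

lemma qbrP_succ (q : ℂ) (x : ℤ) (s : ℕ) :
    qbrP q x (s+1) = qbrP q x s * qbr q (x - s) := Finset.prod_range_succ _ _

lemma qbrAP_succ (a q : ℂ) (x : ℤ) (s : ℕ) :
    qbrAP a q x (s+1) = qbrAP a q x s * qbrA a q (x - s) := Finset.prod_range_succ _ _

lemma qbrP_succ' (q : ℂ) (x : ℤ) (s : ℕ) :
    qbrP q x (s+1) = qbr q x * qbrP q (x-1) s := by
  rw [qbrP, Finset.prod_range_succ']
  push_cast
  rw [sub_zero, mul_comm]
  congr 1
  refine Finset.prod_congr rfl fun k _ => ?_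
  congr 1
  ring

lemma qbrAP_succ' (a q : ℂ) (x : ℤ) (s : ℕ) :
    qbrAP a q x (s+1) = qbrA a q x * qbrAP a q (x-1) s := by
  rw [qbrAP, Finset.prod_range_succ']
  push_cast
  rw [sub_zero, mul_comm]
  congr 1
  refine Finset.prod_congr rfl fun k _ => ?_
  congr 1
  ring

lemma qbrP_vanish (q : ℂ) (n : ℕ) : qbrP q (n : ℤ) (n+1) = 0 := by
  apply Finset.prod_eq_zero (Finset.self_mem_range_succ n)
  simp [qbr]

lemma key0 (a q : ℂ) (ha : a ≠ 0) (hq : q ≠ 0) (M N : ℤ) :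
    qbrA a q (M + N - 1) * qbrA a q N - qbrA a q (M + N) * qbrA a q (N - 1)
      = qbr q 1 * qbr q M := by
  simp only [qbr, qbrA, show M+N-1 = M+N+(-1) by ring,
    zpow_add₀ hq, zpow_neg, zpow_one, mul_inv, inv_inv,
    show N-1 = N+(-1) by ring]
  linear_combination (q⁻¹ * (q ^ M)⁻¹ * q ^ N * (q ^ N)⁻¹ - q⁻¹ * q ^ M * q ^ N * (q ^ N)⁻¹ - q * (q ^ M)⁻¹ * q ^ N * (q ^ N)⁻¹ + q * q ^ M * q ^ N * (q ^ N)⁻¹) * (mul_inv_cancel₀ ha) + (q⁻¹ * (q ^ M)⁻¹ - q⁻¹ * q ^ M - q * (q ^ M)⁻¹ + q * q ^ M) * (mul_inv_cancel₀ (zpow_ne_zero N hq))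


lemma key (a q : ℂ) (ha : a ≠ 0) (hq : q ≠ 0) (M N I : ℤ) :
    qbr q (N + 1) * qbrA a q (M + N - I - 2) * qbrA a q N
      - qbr q (N - I) * qbrA a q (M + N) * qbrA a q (N - 1)
      = qbr q (I + 2) * qbr q (M - I - 1) * qbr q (N - I)
        + qbr q (I + 1) * qbrA a q (M + N - I - 2) * qbrA a q I := by
  simp only [qbr, qbrA, show M+N-I-2 = M+N+(-I)+(-1)+(-1) by ring,
    show N-I = N+(-I) by ring, show N-1 = N+(-1) by ring,
    show I+2 = I+1+1 by ring, show M-I-1 = M+(-I)+(-1) by ring,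
    zpow_add₀ hq, zpow_neg, zpow_one, mul_inv, inv_inv]
  linear_combination (-q⁻¹ * (q ^ M)⁻¹ * q ^ N * (q ^ N)⁻¹ * (q ^ N)⁻¹ * q ^ I + q⁻¹ * (q ^ M)⁻¹ * q ^ N * q ^ N * (q ^ N)⁻¹ * (q ^ I)⁻¹ - q⁻¹ * q⁻¹ * q⁻¹ * q ^ M * q ^ N * (q ^ I)⁻¹ * (q ^ I)⁻¹ * (q ^ I)⁻¹ + q⁻¹ * q⁻¹ * q⁻¹ * q ^ M * q ^ N * (q ^ N)⁻¹ * (q ^ N)⁻¹ * (q ^ I)⁻¹ - q * q ^ M * q ^ N * (q ^ N)⁻¹ * (q ^ N)⁻¹ * q ^ I + q * q ^ M * q ^ N * q ^ N * (q ^ N)⁻¹ * (q ^ I)⁻¹ + q * q⁻¹ * q⁻¹ * q ^ M * q ^ N * q ^ I * (q ^ I)⁻¹ * (q ^ I)⁻¹ - q * q⁻¹ * q⁻¹ * q ^ M * q ^ N * q ^ N * (q ^ N)⁻¹ * (q ^ I)⁻¹ - q * q * q⁻¹ * (q ^ M)⁻¹ * (q ^ N)⁻¹ * q ^ I * q ^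 I * (q ^ I)⁻¹ + q * q * q⁻¹ * (q ^ M)⁻¹ * q ^ N * (q ^ N)⁻¹ * (q ^ N)⁻¹ * q ^ I + q * q * q * (q ^ M)⁻¹ * (q ^ N)⁻¹ * q ^ I * q ^ I * q ^ I - q * q * q * (q ^ M)⁻¹ * q ^ N * q ^ N * (q ^ N)⁻¹ * q ^ I) * (mul_inv_cancel₀ ha) + (q⁻¹ * (q ^ M)⁻¹ * (q ^ N)⁻¹ * q ^ I * q ^ I * (q ^ I)⁻¹ - q⁻¹ * (q ^ M)⁻¹ * q ^ N * q ^ I * (q ^ I)⁻¹ * (q ^ I)⁻¹ + q⁻¹ * q ^ M * q ^ N * q ^ I * (q ^ I)⁻¹ * (q ^ I)⁻¹ - q⁻¹ * q ^ M * q ^ N * q ^ N * (q ^ N)⁻¹ * (q ^ I)⁻¹ - q * (q ^ M)⁻¹ * (q ^ N)⁻¹ * q ^ I * q ^ I * (q ^ I)⁻¹ + q * (q ^ M)⁻¹ * q ^ N * (q ^ N)⁻¹ * (q ^ N)⁻¹ * q ^ I + q * q ^ M * (q ^ N)⁻¹ * q ^ I * q ^ I * (q ^ I)⁻¹ - q *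 q ^ M * q ^ N * q ^ I * (q ^ I)⁻¹ * (q ^ I)⁻¹ + a⁻¹ * a⁻¹ * q * (q ^ M)⁻¹ * (q ^ N)⁻¹ * q ^ I * (q ^ I)⁻¹ * (q ^ I)⁻¹ - a⁻¹ * a⁻¹ * q * (q ^ M)⁻¹ * (q ^ N)⁻¹ * (q ^ N)⁻¹ * (q ^ N)⁻¹ * q ^ I - a * a * q⁻¹ * q ^ M * q ^ N * q ^ I * q ^ I * (q ^ I)⁻¹ + a * a * q⁻¹ * q ^ M * q ^ N * q ^ N * q ^ N * (q ^ I)⁻¹) * (mul_inv_cancel₀ hq) + (-q⁻¹ * (q ^ M)⁻¹ * (q ^ N)⁻¹ * q ^ I + q⁻¹ * (q ^ M)⁻¹ * q ^ N * (q ^ I)⁻¹ - q⁻¹ * q ^ M * q ^ N * (q ^ I)⁻¹ + q⁻¹ * q⁻¹ * q⁻¹ * q ^ M * (q ^ N)⁻¹ * (q ^ I)⁻¹ + q * (q ^ M)⁻¹ * (q ^ N)⁻¹ * q ^ I - q * q ^ M * (q ^ N)⁻¹ * q ^ I + q * q ^ M * q ^ N * (q ^ I)⁻¹ - q * q * q *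 (q ^ M)⁻¹ * q ^ N * q ^ I - a⁻¹ * a⁻¹ * q * (q ^ M)⁻¹ * (q ^ N)⁻¹ * (q ^ I)⁻¹ + a⁻¹ * a⁻¹ * q * q * q * (q ^ M)⁻¹ * (q ^ N)⁻¹ * q ^ I + a * a * q⁻¹ * q ^ M * q ^ N * q ^ I - a * a * q⁻¹ * q⁻¹ * q⁻¹ * q ^ M * q ^ N * (q ^ I)⁻¹) * (mul_inv_cancel₀ (zpow_ne_zero N hq)) + (q⁻¹ * (q ^ M)⁻¹ * (q ^ N)⁻¹ * q ^ I - q⁻¹ * (q ^ M)⁻¹ * q ^ N * (q ^ I)⁻¹ + q⁻¹ * q ^ M * q ^ N * (q ^ I)⁻¹ - q⁻¹ * q⁻¹ * q⁻¹ * q ^ M * (q ^ N)⁻¹ * (q ^ I)⁻¹ - q * (q ^ M)⁻¹ * (q ^ N)⁻¹ * q ^ I + q * q ^ M * (q ^ N)⁻¹ * q ^ I - q * q ^ M * q ^ N * (q ^ I)⁻¹ + q * q * q * (q ^ M)⁻¹ * q ^ N * q ^ I + a⁻¹ * a⁻¹ * q * (q ^ M)⁻¹ * (q ^ N)⁻¹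 * (q ^ I)⁻¹ - a⁻¹ * a⁻¹ * q * q * q * (q ^ M)⁻¹ * (q ^ N)⁻¹ * q ^ I - a * a * q⁻¹ * q ^ M * q ^ N * q ^ I + a * a * q⁻¹ * q⁻¹ * q⁻¹ * q ^ M * q ^ N * (q ^ I)⁻¹) * (mul_inv_cancel₀ (zpow_ne_zero I hq))

noncomputable def Kt (a q : ℂ) (m n i : ℕ) : ℂ :=
  (-1:ℂ)^i * qbr q ((i:ℤ)+1) * qbrP q (m:ℤ) (i+1) * qbrP q (n:ℤ) i *
    qbrAP a q ((m:ℤ) + n - i - 2) (n-i) * qbrAP a q ((n:ℤ) - 1) (n-i)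

lemma step (a q : ℂ) (ha : a ≠ 0) (hq : q ≠ 0) (m n : ℕ) :
    ∑ i ∈ Finset.range (n + 2),
        (-1 : ℂ) ^ i * qbrP q (m:ℤ) i * qbrP q ((n:ℤ)+1) i *
          qbrAP a q ((m : ℤ) + n - i - 1) (n + 1 - i) *
          qbrAP a q (n : ℤ) (n + 1 - i)
      = qbrA a q ((m:ℤ) + n) * qbrA a q ((n:ℤ) - 1) *
        ∑ i ∈ Finset.range (n + 1),
          (-1 : ℂ) ^ i * qbrP q (m:ℤ) i * qbrP q (n:ℤ) i *
            qbrAP a q ((m : ℤ) + n - i - 2) (n - i) *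
            qbrAP a q ((n : ℤ) - 1) (n - i) := by
  set B : ℂ := qbrA a q ((m:ℤ) + n) * qbrA a q ((n:ℤ) - 1) with hB
  set F : ℕ → ℂ := fun i => (-1:ℂ)^i * qbrP q (m:ℤ) i * qbrP q ((n:ℤ)+1) i *
      qbrAP a q ((m:ℤ)+n-i-1) (n+1-i) * qbrAP a q (n:ℤ) (n+1-i) with hF
  set G : ℕ → ℂ := fun i => B * ((-1:ℂ)^i * qbrP q (m:ℤ) i * qbrP q (n:ℤ) i *
      qbrAP a q ((m:ℤ)+n-i-2) (n-i) * qbrAP a q ((n:ℤ)-1) (n-i)) with hG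
  have h0 : F 0 - G 0 = Kt a q m n 0 := by
    simp only [hF, hG, Kt]
    push_cast
    simp only [pow_zero, one_mul, qbrP_zero, Nat.sub_zero, sub_zero, mul_one]
    rw [qbrAP_succ' a q ((m:ℤ)+n-1) n, qbrAP_succ' a q (n:ℤ) n,
      show (m:ℤ)+(n:ℤ)-1-1 = (m:ℤ)+(n:ℤ)-2 by ring, hB]
    have e1 : qbrP q (m:ℤ) 1 = qbr q (m:ℤ) := by simp [qbrP]
    rw [e1]
    linear_combination (qbrAP a q ((m:ℤ)+(n:ℤ)-2) n * qbrAP a q ((n:ℤ)-1) n) * key0 a q ha hq (m:ℤ) (n:ℤ)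
  have hsucc : ∀ i ∈ Finset.range (n+1), F (i+1) - G (i+1) = Kt a q m n (i+1) - Kt a q m n i := by
    intro i hi
    simp only [Finset.mem_range] at hi
    rcases Nat.lt_or_ge i n with hlt | hge
    · obtain ⟨j, rfl⟩ : ∃ j, n = i + 1 + j := ⟨n - i - 1, by omega⟩
      have c1 : i+1+j+1-(i+1) = j+1 := by omega
      have c2 : i+1+j-(i+1) = j := by omega
      have c3 : i+1+j-i = j+1 := by omega
      simp only [hF, hG, Kt, c1, c2, c3]
      push_cast
      simp only [show ((m:ℤ) + ((i:ℤ)+1+(j:ℤ)) - ((i:ℤ)+1) - 1 : ℤ) = (m:ℤ)+((i:ℤ)+1+(j:ℤ))-(i:ℤ)-2 by ring,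
        show ((m:ℤ) + ((i:ℤ)+1+(j:ℤ)) - ((i:ℤ)+1) - 2 : ℤ) = (m:ℤ)+((i:ℤ)+1+(j:ℤ))-(i:ℤ)-3 by ring,
        show ((i:ℤ)+1+1 : ℤ) = (i:ℤ)+2 by ring]
      rw [qbrP_succ' q ((i:ℤ)+1+(j:ℤ)+1) i, qbrP_succ q ((i:ℤ)+1+(j:ℤ)) i, qbrP_succ q (m:ℤ) (i+1),
        qbrAP_succ' a q ((m:ℤ)+((i:ℤ)+1+(j:ℤ))-(i:ℤ)-2) j, qbrAP_succ' a q ((i:ℤ)+1+(j:ℤ)) j,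
        qbrAP_succ a q ((i:ℤ)+1+(j:ℤ)-1) j, hB]
      simp only [show ((i:ℤ)+1+(j:ℤ)+1-1 : ℤ) = (i:ℤ)+1+(j:ℤ) by ring,
        show ((m:ℤ)+((i:ℤ)+1+(j:ℤ))-(i:ℤ)-2-1 : ℤ) = (m:ℤ)+((i:ℤ)+1+(j:ℤ))-(i:ℤ)-3 by ring,
        show ((i:ℤ)+1+(j:ℤ)-1-(j:ℤ) : ℤ) = (i:ℤ) by ring,
        show ((m:ℤ) - ((i+1:ℕ):ℤ) : ℤ) = (m:ℤ)-(i:ℤ)-1 by push_cast; ring,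
        show (((i+1+j:ℕ)):ℤ) = (i:ℤ)+1+(j:ℤ) by push_cast; ring]
      linear_combination ((-1:ℂ)^(i+1) * qbrP q (m:ℤ) (i+1) * qbrP q ((i:ℤ)+1+(j:ℤ)) i *
        qbrAP a q ((m:ℤ)+((i:ℤ)+1+(j:ℤ))-(i:ℤ)-3) j * qbrAP a q ((i:ℤ)+1+(j:ℤ)-1) j) *
        key a q ha hq (m:ℤ) ((i:ℤ)+1+(j:ℤ)) (i:ℤ)
    · have : n = i := by omega
      subst this
      have hg : G (n+1) = 0 := by rw [hG]; simp only; rw [qbrP_vanish]; ring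
      have hk : Kt a q m n (n+1) = 0 := by unfold Kt; rw [qbrP_vanish]; ring
      rw [hg, hk, sub_zero, zero_sub]
      simp only [hF, Kt, Nat.sub_self, Nat.add_sub_cancel_left, qbrAP_zero, mul_one]
      rw [qbrP_succ' q ((n:ℤ)+1) n, show (n:ℤ)+1-1 = (n:ℤ) by ring]
      ring
  have htel : ∑ i ∈ Finset.range (n+2), (F i - G i) = 0 := by
    rw [Finset.sum_range_succ' (fun i => F i - G i) (n+1)]
    rw [Finset.sum_congr rfl hsucc, Finset.sum_range_sub (Kt a q m n) (n+1)]
    have h1 : Kt a q m n (n+1) = 0 := by unfold Kt; rw [qbrP_vanish]; ring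
    rw [h1, h0]
    ring
  have hG2 : ∑ i ∈ Finset.range (n+2), G i = ∑ i ∈ Finset.range (n+1), G i := by
    rw [Finset.sum_range_succ]
    have : G (n+1) = 0 := by rw [hG]; simp only; rw [qbrP_vanish]; ring
    rw [this, add_zero]
  rw [Finset.sum_sub_distrib, sub_eq_zero] at htel
  rw [htel, hG2, hG, Finset.mul_sum]

theorem statement_4 (a q : ℂ) (ha : a ≠ 0) (hq : q ≠ 0) (m n : ℕ) (hmn : n ≤ m) :
    ∑ i ∈ Finset.range (n + 1),
        (-1 : ℂ) ^ i * qbrP q m i * qbrP q n i *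
          qbrAP a q ((m : ℤ) + (n : ℤ) - (i : ℤ) - 2) (n - i) *
          qbrAP a q ((n : ℤ) - 1) (n - i) =
      qbrAP a q ((m : ℤ) + (n : ℤ) - 1) n * qbrAP a q ((n : ℤ) - 2) n := by
  clear hmn
  induction n with
  | zero => norm_num [Finset.sum_range_one, qbrP, qbrAP]
  | succ n ih =>
      push_cast
      simp only [show ∀ i:ℕ, ((m:ℤ)+((n:ℤ)+1)-(i:ℤ)-2) = (m:ℤ)+(n:ℤ)-(i:ℤ)-1 from fun i => by ring,
        show ((n:ℤ)+1-1 : ℤ) = (n:ℤ) by ring,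
        show ((m:ℤ)+((n:ℤ)+1)-1 : ℤ) = (m:ℤ)+(n:ℤ) by ring,
        show ((n:ℤ)+1-2 : ℤ) = (n:ℤ)-1 by ring]
      rw [show n+1+1 = n+2 from rfl]
      rw [step a q ha hq m n, ih]
      rw [qbrAP_succ' a q ((m:ℤ)+n) n, qbrAP_succ' a q ((n:ℤ)-1) n]
      rw [show ((m:ℤ)+(n:ℤ)-1 : ℤ) = (m:ℤ)+(n:ℤ)-1 from rfl, show ((n:ℤ)-1-1 : ℤ) = (n:ℤ)-2 by ring]
      ring
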